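/- Let A = 𝔽₂ and f = 1 + x₁ + x₂. If a configuration c : ℤ² → 𝔽₂ satisfies f·c = 0 (i.e., c lies in the Ledrappier subshift) and c is also annihilated by a nonzero Laurent polynomial g ∈ 𝔽₂[x₁^{±1}, x₂^{±1}] all of whose irreducible factors are line polynomials, then c is two-periodic. -/

import Mathlib

/-- Multiplication of a configuration `c : ℤ² → 𝔽₂` by a Laurent polynomial
`g ∈ 𝔽₂[x₁^{±1}, x₂^{±1}]` (an element of the group algebra of `ℤ²`):
`(g·c)(u) = Σ_v g_v · c(u - v)`, computed in `𝔽₂`. -/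
def mulConfig (g : AddMonoidAlgebra (ZMod 2) (ℤ × ℤ)) (c : ℤ × ℤ → ZMod 2) :
    ℤ × ℤ → ZMod 2 :=
  fun u => ∑ v ∈ g.coeff.support, g.coeff v * c (u - v)

/-- A line polynomial: its support has at least two elements and is contained
in `ℤw` for some `w ∈ ℤ²`. -/
def IsLinePoly (q : AddMonoidAlgebra (ZMod 2) (ℤ × ℤ)) : Prop :=
  2 ≤ q.coeff.support.card ∧ ∃ w : ℤ × ℤ, ∀ v ∈ q.coeff.support, ∃ n : ℤ, v = n • w

abbrev Rl := AddMonoidAlgebra (ZMod 2) (ℤ × ℤ)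
abbrev Al := Polynomial (ZMod 2)

open AddMonoidAlgebra Polynomial


lemma mulConfig_eq_sum (g : Rl) (c : ℤ × ℤ → ZMod 2) (u : ℤ × ℤ) :
    mulConfig g c u = g.coeff.sum (fun v r => r * c (u - v)) := rfl

lemma mulConfig_add (p q : Rl) (c : ℤ × ℤ → ZMod 2) :
    mulConfig (p + q) c = mulConfig p c + mulConfig q c := by
  funext u
  simp only [mulConfig_eq_sum, Pi.add_apply]
  apply Finsupp.sum_add_index
  · intros; simp
  · intros; ring

lemma mulConfig_single (v : ℤ × ℤ) (r : ZMod 2) (c : ℤ × ℤ → ZMod 2) :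
    mulConfig (AddMonoidAlgebra.single v r) c = fun u => r * c (u - v) := by
  funext u
  rw [mulConfig_eq_sum]
  exact Finsupp.sum_single_index (by simp)

lemma mulConfig_zero_left (c : ℤ × ℤ → ZMod 2) : mulConfig 0 c = 0 := by
  funext u; simp [mulConfig]

lemma mulConfig_zero_right (p : Rl) : mulConfig p 0 = 0 := by
  funext u; simp [mulConfig]

lemma mulConfig_add_right (p : Rl) (c d : ℤ × ℤ → ZMod 2) :
    mulConfig p (c + d) = mulConfig p c + mulConfig p d := by
  funext u; simp [mulConfig, mul_add, Finset.sum_add_distrib]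



lemma Rl.induction {motive : Rl → Prop} (p : Rl) (h0 : motive 0)
    (ha : ∀ (v : ℤ × ℤ) (r : ZMod 2) (p : Rl), v ∉ p.coeff.support → r ≠ 0 → motive p →
      motive (AddMonoidAlgebra.single v r + p)) : motive p :=
  AddMonoidAlgebra.induction p h0 ha

lemma mulConfig_mul (p q : Rl) (c : ℤ × ℤ → ZMod 2) :
    mulConfig (p * q) c = mulConfig p (mulConfig q c) := by
  induction p using Rl.induction with
  | h0 => simp [mulConfig_zero_left]
  | ha v r p hv hr ih =>
    have hsingle : ∀ q : Rl, mulConfig ((AddMonoidAlgebra.single v r) * q) c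
        = mulConfig (AddMonoidAlgebra.single v r) (mulConfig q c) := by
      intro q
      induction q using Rl.induction with
      | h0 => simp [mulConfig_zero_left, mulConfig_zero_right]
      | ha w s q hw hs ihq =>
        rw [mul_add, mulConfig_add, ihq, AddMonoidAlgebra.single_mul_single,
          mulConfig_add (AddMonoidAlgebra.single w s) q, mulConfig_add_right]
        congr 1
        rw [mulConfig_single, mulConfig_single, mulConfig_single]
        funext u
        show r * s * c (u - (v + w)) = r * (s * c (u - v - w))
        rw [← sub_sub]
        ring
    rw [add_mul, mulConfig_add, ih, hsingle, mulConfig_add (AddMonoidAlgebra.single v r) p]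

noncomputable section


noncomputable def theta0 : Al →+* Rl :=
  eval₂RingHom AddMonoidAlgebra.singleZeroRingHom (AddMonoidAlgebra.single ((1 : ℤ), (0 : ℤ)) 1)

noncomputable def theta : (Polynomial Al) →+* Rl :=
  eval₂RingHom theta0 (AddMonoidAlgebra.single ((0 : ℤ), (1 : ℤ)) 1)

lemma theta0_C (r : ZMod 2) : theta0 (C r) = AddMonoidAlgebra.single 0 r := by
  simp [theta0]

lemma theta0_X : theta0 X = AddMonoidAlgebra.single ((1:ℤ), (0:ℤ)) 1 := by
  simp [theta0]

lemma theta0_X_pow (a : ℕ) :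
    theta0 (X ^ a) = AddMonoidAlgebra.single ((a : ℤ), (0:ℤ)) 1 := by
  rw [map_pow, theta0_X, AddMonoidAlgebra.single_pow]
  norm_num

lemma theta0_monomial (a : ℕ) (r : ZMod 2) :
    theta0 (C r * X ^ a) = AddMonoidAlgebra.single ((a : ℤ), (0:ℤ)) r := by
  rw [map_mul, theta0_C, theta0_X_pow, AddMonoidAlgebra.single_mul_single]
  simp

lemma theta_C (p : Al) : theta (C p) = theta0 p := by simp [theta]

lemma theta_X : theta X = AddMonoidAlgebra.single ((0:ℤ), (1:ℤ)) 1 := by simp [theta]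

lemma theta_monomial (a b : ℕ) (r : ZMod 2) :
    theta (C (C r * X ^ a) * X ^ b) = AddMonoidAlgebra.single ((a : ℤ), (b : ℤ)) r := by
  rw [map_mul, theta_C, theta0_monomial, map_pow, theta_X, AddMonoidAlgebra.single_pow,
    AddMonoidAlgebra.single_mul_single]
  norm_num

lemma exists_theta (g : Rl) :
    ∃ (v : ℤ × ℤ) (p : Polynomial Al), theta p = AddMonoidAlgebra.single v 1 * g := by
  induction g using Rl.induction with
  | h0 => exact ⟨0, 0, by simp⟩
  | ha w b g hw hb ih =>
    obtain ⟨v', p', hp'⟩ := ih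
    obtain ⟨w1, w2⟩ := w
    obtain ⟨x1, x2⟩ := v'
    set n1 : ℕ := (-(x1 + w1)).toNat with hn1
    set n2 : ℕ := (-(x2 + w2)).toNat with hn2
    set a : ℕ := (x1 + (n1 : ℤ) + w1).toNat with ha
    set b2 : ℕ := (x2 + (n2 : ℤ) + w2).toNat with hb2
    refine ⟨(x1 + n1, x2 + n2), C (C b * X ^ a) * X ^ b2 + C (C 1 * X ^ n1) * X ^ n2 * p', ?_⟩
    rw [map_add, theta_monomial, map_mul, theta_monomial, hp', mul_add]
    congr 1
    · rw [AddMonoidAlgebra.single_mul_single, one_mul]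
      congr 1
      rw [Prod.mk_add_mk, Prod.mk.injEq]
      omega
    · rw [← mul_assoc, AddMonoidAlgebra.single_mul_single, one_mul, Prod.mk_add_mk,
        add_comm (n1 : ℤ) x1, add_comm (n2 : ℤ) x2]



def Df (α β : ℤ) (v : ℤ × ℤ) : ℤ := α * v.1 + β * v.2

lemma Df_add (α β : ℤ) (a b : ℤ × ℤ) : Df α β (a + b) = Df α β a + Df α β b := by
  simp [Df]; ring

lemma nzsupp {p : Rl} (hp : p ≠ 0) : p.coeff.support.Nonempty :=
  Finsupp.support_nonempty_iff.mpr (mt AddMonoidAlgebra.coeff_eq_zero.mp hp)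

def sdeg (α β : ℤ) (p : Rl) (hp : p ≠ 0) : ℤ := p.coeff.support.sup' (nzsupp hp) (Df α β)

lemma le_sdeg {α β : ℤ} {p : Rl} (hp : p ≠ 0) {v : ℤ × ℤ} (hv : v ∈ p.coeff.support) :
    Df α β v ≤ sdeg α β p hp := Finset.le_sup' _ hv

lemma sdeg_mul (α β : ℤ) (p q : Rl) (hp : p ≠ 0) (hq : q ≠ 0) :
    sdeg α β (p * q) (mul_ne_zero hp hq) = sdeg α β p hp + sdeg α β q hq := by
  classical
  set Mp := sdeg α β p hp with hMp
  set Mq := sdeg α β q hq with hMq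
  apply le_antisymm
  · apply Finset.sup'_le
    intro w hw
    obtain ⟨a, ha, b, hb, rfl⟩ := Finset.mem_add.mp (AddMonoidAlgebra.support_coeff_mul_subset p q hw)
    rw [Df_add]
    exact add_le_add (le_sdeg hp ha) (le_sdeg hq hb)
  · obtain ⟨a, haS, hda⟩ := Finset.exists_mem_eq_sup' (nzsupp hp) (Df α β)
    obtain ⟨b, hbS, hdb⟩ := Finset.exists_mem_eq_sup' (nzsupp hq) (Df α β)
    set P : Rl := AddMonoidAlgebra.ofCoeff (p.coeff.filter (fun v => Df α β v = Mp)) with hP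
    set Pc : Rl := AddMonoidAlgebra.ofCoeff (p.coeff.filter (fun v => ¬ (Df α β v = Mp))) with hPc
    set Q : Rl := AddMonoidAlgebra.ofCoeff (q.coeff.filter (fun v => Df α β v = Mq)) with hQ
    set Qc : Rl := AddMonoidAlgebra.ofCoeff (q.coeff.filter (fun v => ¬ (Df α β v = Mq))) with hQc
    have hda' : Df α β a = Mp := by rw [hMp, sdeg]; exact hda.symm
    have hdb' : Df α β b = Mq := by rw [hMq, sdeg]; exact hdb.symm
    have hPa : P.coeff a = p.coeff a := by rw [hP, AddMonoidAlgebra.coeff_ofCoeff, Finsupp.filter_apply, if_pos hda']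
    have hQb : Q.coeff b = q.coeff b := by rw [hQ, AddMonoidAlgebra.coeff_ofCoeff, Finsupp.filter_apply, if_pos hdb']
    have hPne : P ≠ 0 := by
      intro h
      apply Finsupp.mem_support_iff.mp haS
      rw [← hPa, h]; rfl
    have hQne : Q ≠ 0 := by
      intro h
      apply Finsupp.mem_support_iff.mp hbS
      rw [← hQb, h]; rfl
    obtain ⟨w, hw⟩ := nzsupp (mul_ne_zero hPne hQne)
    have hsuppP : P.coeff.support ⊆ p.coeff.support.filter (fun v => Df α β v = Mp) := by
      rw [hP, AddMonoidAlgebra.coeff_ofCoeff, Finsupp.support_filter]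
    have hsuppQ : Q.coeff.support ⊆ q.coeff.support.filter (fun v => Df α β v = Mq) := by
      rw [hQ, AddMonoidAlgebra.coeff_ofCoeff, Finsupp.support_filter]
    have hsuppPc : Pc.coeff.support ⊆ p.coeff.support.filter (fun v => ¬ (Df α β v = Mp)) := by
      rw [hPc, AddMonoidAlgebra.coeff_ofCoeff, Finsupp.support_filter]
    have hsuppQc : Qc.coeff.support ⊆ q.coeff.support.filter (fun v => ¬ (Df α β v = Mq)) := by
      rw [hQc, AddMonoidAlgebra.coeff_ofCoeff, Finsupp.support_filter]
    have hDw : Df α β w = Mp + Mq := by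
      obtain ⟨a', ha', b', hb', rfl⟩ := Finset.mem_add.mp (AddMonoidAlgebra.support_coeff_mul_subset P Q hw)
      obtain ⟨-, h1⟩ := Finset.mem_filter.mp (hsuppP ha')
      obtain ⟨-, h2⟩ := Finset.mem_filter.mp (hsuppQ hb')
      rw [Df_add, h1, h2]
    -- cross terms vanish at w
    have cross : ∀ (X Y : Rl), X.coeff.support ⊆ p.coeff.support → Y.coeff.support ⊆ q.coeff.support →
        ((∀ v ∈ X.coeff.support, Df α β v < Mp) ∨ (∀ v ∈ Y.coeff.support, Df α β v < Mq)) →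
        (X * Y).coeff w = 0 := by
      intro X Y hX hY hlt
      by_contra hne
      have hwXY : w ∈ (X * Y).coeff.support := Finsupp.mem_support_iff.mpr hne
      obtain ⟨a', ha', b', hb', hab⟩ := Finset.mem_add.mp (AddMonoidAlgebra.support_coeff_mul_subset X Y hwXY)
      have h1 : Df α β a' ≤ Mp := le_sdeg hp (hX ha')
      have h2 : Df α β b' ≤ Mq := le_sdeg hq (hY hb')
      have : Df α β a' + Df α β b' < Mp + Mq := by
        rcases hlt with h | h
        · exact add_lt_add_of_lt_of_le (h _ ha') h2
        · exact add_lt_add_of_le_of_lt h1 (h _ hb')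
      rw [← Df_add, hab, hDw] at this
      omega
    have hsplitp : P + Pc = p := AddMonoidAlgebra.coeff_injective (Finsupp.filter_pos_add_filter_neg _ _)
    have hsplitq : Q + Qc = q := AddMonoidAlgebra.coeff_injective (Finsupp.filter_pos_add_filter_neg _ _)
    have hPclt : ∀ v ∈ Pc.coeff.support, Df α β v < Mp := by
      intro v hv
      obtain ⟨hv', hne⟩ := Finset.mem_filter.mp (hsuppPc hv)
      exact lt_of_le_of_ne (le_sdeg hp hv') hne
    have hQclt : ∀ v ∈ Qc.coeff.support, Df α β v < Mq := by
      intro v hv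
      obtain ⟨hv', hne⟩ := Finset.mem_filter.mp (hsuppQc hv)
      exact lt_of_le_of_ne (le_sdeg hq hv') hne
    have hsubP : P.coeff.support ⊆ p.coeff.support := fun v hv => (Finset.mem_filter.mp (hsuppP hv)).1
    have hsubPc : Pc.coeff.support ⊆ p.coeff.support := fun v hv => (Finset.mem_filter.mp (hsuppPc hv)).1
    have hsubQ : Q.coeff.support ⊆ q.coeff.support := fun v hv => (Finset.mem_filter.mp (hsuppQ hv)).1
    have hsubQc : Qc.coeff.support ⊆ q.coeff.support := fun v hv => (Finset.mem_filter.mp (hsuppQc hv)).1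
    have hcoeff : (p * q).coeff w = (P * Q).coeff w := by
      conv_lhs => rw [← hsplitp, ← hsplitq]
      rw [add_mul, mul_add, mul_add]
      simp only [AddMonoidAlgebra.coeff_add, Finsupp.add_apply]
      rw [cross P Qc hsubP hsubQc (Or.inr hQclt),
        cross Pc Q hsubPc hsubQ (Or.inl hPclt),
        cross Pc Qc hsubPc hsubQc (Or.inl hPclt)]
      ring
    have hwpq : w ∈ (p * q).coeff.support := by
      rw [Finsupp.mem_support_iff, hcoeff]
      exact Finsupp.mem_support_iff.mp hw
    calc Mp + Mq = Df α β w := hDw.symm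
    _ ≤ _ := Finset.le_sup' _ hwpq

def wdt (α β : ℤ) (p : Rl) (hp : p ≠ 0) : ℤ := sdeg α β p hp + sdeg (-α) (-β) p hp

lemma wdt_mul (α β : ℤ) (p q : Rl) (hp : p ≠ 0) (hq : q ≠ 0) :
    wdt α β (p * q) (mul_ne_zero hp hq) = wdt α β p hp + wdt α β q hq := by
  unfold wdt
  rw [sdeg_mul α β p q hp hq, sdeg_mul (-α) (-β) p q hp hq]
  ring

lemma Df_neg (α β : ℤ) (v : ℤ × ℤ) : Df (-α) (-β) v = -Df α β v := by simp [Df]; ring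

lemma wdt_ge {α β : ℤ} {p : Rl} (hp : p ≠ 0) {a b : ℤ × ℤ}
    (ha : a ∈ p.coeff.support) (hb : b ∈ p.coeff.support) :
    Df α β a - Df α β b ≤ wdt α β p hp := by
  have h1 := le_sdeg (α := α) (β := β) hp ha
  have h2 := le_sdeg (α := -α) (β := -β) hp hb
  rw [Df_neg] at h2
  unfold wdt
  omega

lemma wdt_nonneg {α β : ℤ} {p : Rl} (hp : p ≠ 0) : 0 ≤ wdt α β p hp := by
  obtain ⟨a, ha⟩ := nzsupp hp
  have := wdt_ge (α := α) (β := β) hp ha ha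
  omega

lemma wdt_zero_eq {α β : ℤ} {p : Rl} (hp : p ≠ 0) (h : wdt α β p hp = 0)
    {a b : ℤ × ℤ} (ha : a ∈ p.coeff.support) (hb : b ∈ p.coeff.support) : Df α β a = Df α β b := by
  have h1 := wdt_ge (α := α) (β := β) hp ha hb
  have h2 := wdt_ge (α := α) (β := β) hp hb ha
  omega





lemma zmod2_eq_one {r : ZMod 2} (hr : r ≠ 0) : r = 1 := by revert hr; revert r; decide

lemma isUnit_single (v : ℤ × ℤ) {r : ZMod 2} (hr : r ≠ 0) :
    IsUnit (AddMonoidAlgebra.single v r) := by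
  rw [zmod2_eq_one hr]
  apply IsUnit.of_mul_eq_one (AddMonoidAlgebra.single (-v) 1)
  rw [AddMonoidAlgebra.single_mul_single, add_neg_cancel, one_mul]
  rfl

lemma wdt_congr (α β : ℤ) {p q : Rl} (hp : p ≠ 0) (hq : q ≠ 0) (h : p = q) :
    wdt α β p hp = wdt α β q hq := by subst h; rfl

lemma isUnit_of_wdt_zero {p : Rl} (hp : p ≠ 0)
    (h1 : wdt 1 0 p hp = 0) (h2 : wdt 0 1 p hp = 0) : IsUnit p := by
  obtain ⟨a, ha⟩ := nzsupp hp
  have hsub : p.coeff.support ⊆ {a} := by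
    intro b hb
    have e1 := wdt_zero_eq hp h1 hb ha
    have e2 := wdt_zero_eq hp h2 hb ha
    simp only [Df] at e1 e2
    have : b = a := by
      ext
      · omega
      · omega
    simp [this]
  rw [show p = AddMonoidAlgebra.single a (p.coeff a) from
    AddMonoidAlgebra.coeff_injective (Finsupp.support_subset_singleton.mp hsub)]
  exact isUnit_single a (Finsupp.mem_support_iff.mp ha)

lemma wdt_pos_of_nonunit {p : Rl} (hp : p ≠ 0) (hu : ¬ IsUnit p) :
    1 ≤ wdt 1 0 p hp + wdt 0 1 p hp := by
  by_contra hc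
  have n1 := wdt_nonneg (α := 1) (β := 0) hp
  have n2 := wdt_nonneg (α := 0) (β := 1) hp
  exact hu (isUnit_of_wdt_zero hp (by omega) (by omega))

noncomputable def FLed : Rl :=
  AddMonoidAlgebra.single ((0:ℤ),(0:ℤ)) 1 + AddMonoidAlgebra.single ((1:ℤ),(0:ℤ)) 1
    + AddMonoidAlgebra.single ((0:ℤ),(1:ℤ)) 1

lemma FLed_support : FLed.coeff.support = {((0:ℤ),(0:ℤ)), ((1:ℤ),(0:ℤ)), ((0:ℤ),(1:ℤ))} := by
  have s1 : (AddMonoidAlgebra.single ((0:ℤ),(0:ℤ)) (1 : ZMod 2)).coeff.support = {((0:ℤ),(0:ℤ))} :=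
    Finsupp.support_single_ne_zero _ one_ne_zero
  have s2 : (AddMonoidAlgebra.single ((1:ℤ),(0:ℤ)) (1 : ZMod 2)).coeff.support = {((1:ℤ),(0:ℤ))} :=
    Finsupp.support_single_ne_zero _ one_ne_zero
  have s3 : (AddMonoidAlgebra.single ((0:ℤ),(1:ℤ)) (1 : ZMod 2)).coeff.support = {((0:ℤ),(1:ℤ))} :=
    Finsupp.support_single_ne_zero _ one_ne_zero
  have h12 : (AddMonoidAlgebra.single ((0:ℤ),(0:ℤ)) (1 : ZMod 2)
      + AddMonoidAlgebra.single ((1:ℤ),(0:ℤ)) 1).coeff.support = {((0:ℤ),(0:ℤ)), ((1:ℤ),(0:ℤ))} := by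
    rw [AddMonoidAlgebra.coeff_add, Finsupp.support_add_eq (by rw [s1, s2]; decide), s1, s2]
    rfl
  rw [FLed, AddMonoidAlgebra.coeff_add, Finsupp.support_add_eq (by rw [h12, s3]; decide), h12, s3]
  rfl

lemma FLed_ne_zero : FLed ≠ 0 := by
  intro h
  have h2 := FLed_support
  rw [h] at h2
  simp only [AddMonoidAlgebra.coeff_zero, Finsupp.support_zero] at h2
  exact absurd h2.symm (by decide)

lemma sdeg_FLed (α β : ℤ) : sdeg α β FLed FLed_ne_zero = max 0 (max α β) := by
  apply le_antisymm
  · apply Finset.sup'_le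
    intro b hb
    rw [FLed_support] at hb
    simp only [Finset.mem_insert, Finset.mem_singleton] at hb
    rcases hb with rfl | rfl | rfl
    · simp only [Df]
      simpa using le_max_left (0:ℤ) (max α β)
    · simp only [Df]
      simpa using le_max_of_le_right (le_max_left α β)
    · simp only [Df]
      simpa using le_max_of_le_right (le_max_right α β)
  · have l0 : Df α β (0,0) ≤ sdeg α β FLed FLed_ne_zero :=
      Finset.le_sup' _ (by rw [FLed_support]; simp)
    have l1 : Df α β (1,0) ≤ sdeg α β FLed FLed_ne_zero :=
      Finset.le_sup' _ (by rw [FLed_support]; simp)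
    have l2 : Df α β (0,1) ≤ sdeg α β FLed FLed_ne_zero :=
      Finset.le_sup' _ (by rw [FLed_support]; simp)
    simp only [Df] at l0 l1 l2
    apply max_le
    · simpa using l0
    · apply max_le
      · simpa using l1
      · simpa using l2

lemma FLed_wdt (α β : ℤ) (hval : α = 1 ∧ β = 0 ∨ α = 0 ∧ β = 1 ∨ α = 1 ∧ β = 1) :
    wdt α β FLed FLed_ne_zero = 1 := by
  rcases hval with ⟨rfl, rfl⟩ | ⟨rfl, rfl⟩ | ⟨rfl, rfl⟩ <;>
    rw [wdt, sdeg_FLed, sdeg_FLed] <;> decide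

lemma wdt_one : wdt 1 1 (1 : Rl) one_ne_zero = 0 ∧ wdt 1 0 (1 : Rl) one_ne_zero = 0
    ∧ wdt 0 1 (1 : Rl) one_ne_zero = 0 := by
  have hs : (1 : Rl).coeff.support = {((0:ℤ),(0:ℤ))} := by
    rw [AddMonoidAlgebra.one_def]
    exact Finsupp.support_single_ne_zero _ one_ne_zero
  have key : ∀ α β : ℤ, sdeg α β (1 : Rl) one_ne_zero = 0 := by
    intro α β
    apply le_antisymm
    · apply Finset.sup'_le
      intro b hb
      rw [hs] at hb
      simp only [Finset.mem_singleton] at hb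
      subst hb
      simp [Df]
    · have h := Finset.le_sup' (Df α β) (s := (1:Rl).coeff.support)
        (b := ((0:ℤ),(0:ℤ))) (by rw [hs]; simp)
      exact le_trans (by simp [Df]) h
  refine ⟨?_, ?_, ?_⟩ <;> rw [wdt, key, key] <;> norm_num

lemma sup'_shift (s : Finset (ℤ × ℤ)) (H : s.Nonempty) (f g : ℤ × ℤ → ℤ) (t : ℤ)
    (h : ∀ v ∈ s, f v = g v + t) : s.sup' H f = s.sup' H g + t := by
  apply le_antisymm
  · apply Finset.sup'_le
    intro v hv
    rw [h v hv]
    exact add_le_add_left (Finset.le_sup' _ hv) t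
  · obtain ⟨b, hb, hbe⟩ := Finset.exists_mem_eq_sup' H g
    rw [hbe]
    rw [← h b hb]
    exact Finset.le_sup' _ hb

lemma wdt_const_snd {p : Rl} (hp : p ≠ 0) (h : wdt 0 1 p hp = 0) :
    wdt 1 1 p hp = wdt 1 0 p hp := by
  obtain ⟨a, ha⟩ := nzsupp hp
  set t : ℤ := a.2 with ht
  have hc : ∀ v ∈ p.coeff.support, v.2 = t := by
    intro v hv
    have := wdt_zero_eq hp h hv ha
    simp only [Df] at this
    omega
  have e1 : sdeg 1 1 p hp = sdeg 1 0 p hp + t := by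
    apply sup'_shift
    intro v hv
    have h2 := hc v hv
    simp only [Df, zero_mul, add_zero]
    omega
  have e2 : sdeg (-1) (-1) p hp = sdeg (-1) (-0) p hp + (-t) := by
    apply sup'_shift
    intro v hv
    have h2 := hc v hv
    simp only [Df, neg_zero, zero_mul, add_zero]
    omega
  rw [wdt, wdt, e1, e2]
  ring

lemma wdt_const_fst {p : Rl} (hp : p ≠ 0) (h : wdt 1 0 p hp = 0) :
    wdt 1 1 p hp = wdt 0 1 p hp := by
  obtain ⟨a, ha⟩ := nzsupp hp
  set t : ℤ := a.1 with ht
  have hc : ∀ v ∈ p.coeff.support, v.1 = t := by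
    intro v hv
    have := wdt_zero_eq hp h hv ha
    simp only [Df] at this
    omega
  have e1 : sdeg 1 1 p hp = sdeg 0 1 p hp + t := by
    apply sup'_shift
    intro v hv
    have h2 := hc v hv
    simp only [Df, zero_mul, zero_add]
    omega
  have e2 : sdeg (-1) (-1) p hp = sdeg (-0) (-1) p hp + (-t) := by
    apply sup'_shift
    intro v hv
    have h2 := hc v hv
    simp only [Df, neg_zero, zero_mul, zero_add]
    omega
  rw [wdt, wdt, e1, e2]
  ring

lemma FLed_irreducible : Irreducible FLed := by
  constructor
  · intro hu
    obtain ⟨u, hu'⟩ := hu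
    have hinv : (↑u⁻¹ : Rl) ≠ 0 := Units.ne_zero _
    have h1 : FLed * ↑u⁻¹ = 1 := by rw [← hu', Units.mul_inv]
    have e := wdt_mul 1 0 FLed (↑u⁻¹) FLed_ne_zero hinv
    have e2 : wdt 1 0 (FLed * ↑u⁻¹) (mul_ne_zero FLed_ne_zero hinv) = 0 := by
      rw [wdt_congr 1 0 _ one_ne_zero h1]
      exact wdt_one.2.1
    have e3 := FLed_wdt 1 0 (by tauto)
    have e4 := wdt_nonneg (α := 1) (β := 0) hinv
    omega
  · intro a b hab
    by_contra hc
    push_neg at hc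
    obtain ⟨hua, hub⟩ := hc
    have ha : a ≠ 0 := by rintro rfl; rw [zero_mul] at hab; exact FLed_ne_zero hab
    have hb : b ≠ 0 := by rintro rfl; rw [mul_zero] at hab; exact FLed_ne_zero hab
    have e10 : wdt 1 0 a ha + wdt 1 0 b hb = 1 := by
      rw [← wdt_mul 1 0 a b ha hb, wdt_congr 1 0 _ FLed_ne_zero hab.symm,
        FLed_wdt 1 0 (by tauto)]
    have e01 : wdt 0 1 a ha + wdt 0 1 b hb = 1 := by
      rw [← wdt_mul 0 1 a b ha hb, wdt_congr 0 1 _ FLed_ne_zero hab.symm,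
        FLed_wdt 0 1 (by tauto)]
    have e11 : wdt 1 1 a ha + wdt 1 1 b hb = 1 := by
      rw [← wdt_mul 1 1 a b ha hb, wdt_congr 1 1 _ FLed_ne_zero hab.symm,
        FLed_wdt 1 1 (by tauto)]
    have na10 := wdt_nonneg (α := 1) (β := 0) ha
    have na01 := wdt_nonneg (α := 0) (β := 1) ha
    have nb10 := wdt_nonneg (α := 1) (β := 0) hb
    have nb01 := wdt_nonneg (α := 0) (β := 1) hb
    have pa := wdt_pos_of_nonunit ha hua
    have pb := wdt_pos_of_nonunit hb hub
    have cases2 : (wdt 1 0 a ha = 1 ∧ wdt 0 1 a ha = 0 ∧ wdt 1 0 b hb = 0 ∧ wdt 0 1 b hb = 1)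
        ∨ (wdt 1 0 a ha = 0 ∧ wdt 0 1 a ha = 1 ∧ wdt 1 0 b hb = 1 ∧ wdt 0 1 b hb = 0) := by
      omega
    rcases cases2 with ⟨q1, q2, q3, q4⟩ | ⟨q1, q2, q3, q4⟩
    · have ca := wdt_const_snd ha q2
      have cb := wdt_const_fst hb q3
      omega
    · have ca := wdt_const_fst ha q1
      have cb := wdt_const_snd hb q4
      omega

lemma not_isLinePoly_FLed : ¬ IsLinePoly FLed := by
  rintro ⟨-, w, hw⟩
  obtain ⟨n, hn⟩ := hw ((1:ℤ),(0:ℤ)) (by rw [FLed_support]; simp)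
  obtain ⟨m, hm⟩ := hw ((0:ℤ),(1:ℤ)) (by rw [FLed_support]; simp)
  rw [Prod.ext_iff] at hn hm
  simp only [Prod.smul_fst, Prod.smul_snd, smul_eq_mul] at hn hm
  obtain ⟨hn1, hn2⟩ := hn
  obtain ⟨hm1, hm2⟩ := hm
  have hn0 : n ≠ 0 := by rintro rfl; simp at hn1
  have hw2 : w.2 = 0 := by
    rcases mul_eq_zero.mp hn2.symm with h | h
    · exact absurd h hn0
    · exact h
  rw [hw2, mul_zero] at hm2
  exact one_ne_zero hm2



lemma zmod2_eq_one' {r : ZMod 2} (hr : r ≠ 0) : r = 1 := by revert hr; revert r; decide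

lemma split_pow (h : Al) (hh : h ≠ 0) :
    ∃ (s : ℕ) (h₀ : Al), h = X ^ s * h₀ ∧ h₀.coeff 0 ≠ 0 := by
  obtain ⟨h₀, hfac, hndvd⟩ := Polynomial.exists_eq_pow_rootMultiplicity_mul_and_not_dvd h hh 0
  refine ⟨h.rootMultiplicity 0, h₀, ?_, ?_⟩
  · simpa using hfac
  · intro hc
    apply hndvd
    rw [map_zero, sub_zero]
    rwa [Polynomial.X_dvd_iff]

lemma exists_pow_sub_one (h₀ : Al) (hc : h₀.coeff 0 ≠ 0) :
    ∃ T : ℕ, 1 ≤ T ∧ h₀ ∣ X ^ T - 1 := by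
  have hne : h₀ ≠ 0 := fun hz => hc (by simp [hz])
  let B := AdjoinRoot h₀
  have : Module.Finite (ZMod 2) B := Module.Finite.of_basis (AdjoinRoot.powerBasis hne).basis
  have : Finite B := Module.finite_of_finite (ZMod 2)
  -- the root is a unit
  set r : B := AdjoinRoot.root h₀ with hr
  have hunit : IsUnit r := by
    have h0 : (Polynomial.aeval r) h₀ = 0 := by
      rw [hr, AdjoinRoot.aeval_eq, AdjoinRoot.mk_self]
    have hsplit : X * h₀.divX + C (h₀.coeff 0) = h₀ := Polynomial.X_mul_divX_add h₀
    have heq := congrArg (Polynomial.aeval r) hsplit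
    rw [map_add, map_mul, aeval_X, aeval_C, h0] at heq
    have hc1 : h₀.coeff 0 = 1 := zmod2_eq_one' hc
    rw [hc1, map_one] at heq
    have this : r * (aeval r h₀.divX) + 1 = 0 := heq
    apply IsUnit.of_mul_eq_one (- aeval r h₀.divX)
    rw [mul_neg]
    linear_combination - this
  obtain ⟨i, j, hij, he⟩ := Finite.exists_ne_map_eq_of_infinite (fun n : ℕ => r ^ n)
  rcases Nat.lt_or_ge i j with hlt | hge
  · refine ⟨j - i, by omega, ?_⟩
    rw [← AdjoinRoot.mk_eq_zero]
    have hrT : r ^ (j - i) = 1 := by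
      have hu := hunit.unit
      have : r ^ i * r ^ (j - i) = r ^ i * 1 := by
        rw [mul_one, ← pow_add]
        rw [Nat.add_sub_cancel' (le_of_lt hlt)]
        exact he.symm
      exact (IsUnit.mul_left_cancel (hunit.pow i) this)
    rw [map_sub, map_one, map_pow]
    rw [AdjoinRoot.mk_X]
    rw [← hr, hrT, sub_self]
  · have hlt' : j < i := by omega
    refine ⟨i - j, by omega, ?_⟩
    rw [← AdjoinRoot.mk_eq_zero]
    have hrT : r ^ (i - j) = 1 := by
      have : r ^ j * r ^ (i - j) = r ^ j * 1 := by
        rw [mul_one, ← pow_add, Nat.add_sub_cancel' (le_of_lt hlt')]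
        exact he
      exact (IsUnit.mul_left_cancel (hunit.pow j) this)
    rw [map_sub, map_one, map_pow, AdjoinRoot.mk_X, ← hr, hrT, sub_self]


-- ===== part 7 =====

lemma add_self_Rl (p : Rl) : p + p = 0 := by
  apply AddMonoidAlgebra.coeff_injective
  ext v
  rw [AddMonoidAlgebra.coeff_add, Finsupp.add_apply]
  exact CharTwo.add_self_eq_zero _

lemma mulConfig_FLed (c : ℤ × ℤ → ZMod 2) (u : ℤ × ℤ) :
    mulConfig FLed c u = c (u - (0, 0)) + c (u - (1, 0)) + c (u - (0, 1)) := by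
  rw [FLed, mulConfig_add, mulConfig_add, Pi.add_apply, Pi.add_apply,
    mulConfig_single, mulConfig_single, mulConfig_single]
  simp

lemma horiz (c : ℤ × ℤ → ZMod 2) (hF : mulConfig FLed c = 0)
    (g : Rl) (hnd : ¬ FLed ∣ g) (hann : mulConfig g c = 0) :
    ∃ T : ℤ, 1 ≤ T ∧ ∀ u, c (u - (T, 0)) = c u := by
  obtain ⟨v, p, hp⟩ := exists_theta g
  have annp : mulConfig (theta p) c = 0 := by
    rw [hp, mulConfig_mul, hann, mulConfig_zero_right]
  set h : Al := p.eval (1 + X) with hh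
  have hdvd : (X - C (1 + X)) ∣ (p - C h) := by
    rw [Polynomial.dvd_iff_isRoot]
    simp [Polynomial.IsRoot, hh]
  obtain ⟨k, hk⟩ := hdvd
  have hpk : p = C h + (X - C (1 + X)) * k := by rw [← hk]; ring
  have hFimg : theta (X - C (1 + X)) = FLed := by
    rw [map_sub, theta_X, theta_C, map_add, map_one, theta0_X]
    have ha := add_self_Rl (1 : Rl)
    have hb := add_self_Rl (AddMonoidAlgebra.single ((1:ℤ),(0:ℤ)) (1 : ZMod 2))
    rw [FLed]
    have h1 : (AddMonoidAlgebra.single ((0:ℤ),(0:ℤ)) (1:ZMod 2)) = (1 : Rl) := rfl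
    rw [h1]
    linear_combination -ha - hb
  have annh : mulConfig (theta0 h) c = 0 := by
    have e1 : theta p = theta0 h + FLed * theta k := by
      rw [hpk, map_add, map_mul, hFimg, theta_C]
    have e2 : mulConfig (FLed * theta k) c = 0 := by
      rw [mul_comm, mulConfig_mul, hF, mulConfig_zero_right]
    rw [e1, mulConfig_add, e2, add_zero] at annp
    exact annp
  by_cases hzero : h = 0
  · exfalso
    apply hnd
    have : theta p = FLed * theta k := by rw [hpk, hzero, map_zero, zero_add, map_mul, hFimg]
    have hdg : FLed ∣ AddMonoidAlgebra.single v 1 * g := ⟨theta k, by rw [← hp, this]⟩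
    obtain ⟨m, hm⟩ := hdg
    refine ⟨AddMonoidAlgebra.single (-v) 1 * m, ?_⟩
    have : AddMonoidAlgebra.single (-v) (1 : ZMod 2) * (AddMonoidAlgebra.single v 1 * g)
        = g := by
      rw [← mul_assoc, AddMonoidAlgebra.single_mul_single, neg_add_cancel, one_mul]
      have h1 : (AddMonoidAlgebra.single ((0:ℤ),(0:ℤ)) (1:ZMod 2)) = (1 : Rl) := rfl
      rw [show ((0:ℤ×ℤ)) = ((0:ℤ),(0:ℤ)) from rfl, h1, one_mul]
    rw [← this, hm]
    ring
  · obtain ⟨s, h₀, hsplit, hc0⟩ := split_pow h hzero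
    obtain ⟨T, hT1, hTdvd⟩ := exists_pow_sub_one h₀ hc0
    obtain ⟨k', hk'⟩ := hTdvd
    have key : X ^ (s + T) = h * k' + X ^ s := by
      rw [hsplit, pow_add]
      rw [mul_assoc, ← hk']
      ring
    have ann2 : mulConfig (theta0 (X ^ (s + T))) c = mulConfig (theta0 (X ^ s)) c := by
      rw [key, map_add, mulConfig_add, map_mul, mul_comm, mulConfig_mul, annh,
        mulConfig_zero_right]
      rw [zero_add]
    rw [theta0_X_pow, theta0_X_pow] at ann2
    rw [mulConfig_single, mulConfig_single] at ann2
    refine ⟨(T : ℤ), by exact_mod_cast hT1, ?_⟩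
    intro u
    have := congrFun ann2 (u + ((s : ℤ), 0))
    simp only [one_mul] at this
    have e : u + ((s:ℤ), 0) - (((s+T : ℕ) : ℤ), 0) = u - ((T:ℤ), 0) := by
      rw [Prod.ext_iff]
      constructor
      · simp; push_cast; ring
      · simp
    have e2 : u + ((s:ℤ), 0) - (((s : ℕ) : ℤ), 0) = u := by
      rw [Prod.ext_iff]
      constructor
      · simp
      · simp
    rw [e, e2] at this
    exact this


-- ===== part 8: swap and main =====

noncomputable def swapE : Rl ≃ₐ[ZMod 2] Rl :=
  AddMonoidAlgebra.domCongr (ZMod 2) (ZMod 2) (AddEquiv.prodComm : (ℤ × ℤ) ≃+ ℤ × ℤ)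

lemma swapE_single (v : ℤ × ℤ) (r : ZMod 2) :
    swapE (AddMonoidAlgebra.single v r) = AddMonoidAlgebra.single v.swap r := by
  rw [swapE, AddMonoidAlgebra.domCongr_single]
  rfl

lemma swapE_invol (g : Rl) : swapE (swapE g) = g := by
  induction g using Rl.induction with
  | h0 => simp
  | ha v r p hv hr ih => rw [map_add, map_add, ih, swapE_single, swapE_single, Prod.swap_swap]

lemma swapE_FLed : swapE FLed = FLed := by
  rw [FLed, map_add, map_add, swapE_single, swapE_single, swapE_single]
  have e0 : ((0:ℤ),(0:ℤ)).swap = ((0:ℤ),(0:ℤ)) := rfl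
  have e1 : ((1:ℤ),(0:ℤ)).swap = ((0:ℤ),(1:ℤ)) := rfl
  have e2 : ((0:ℤ),(1:ℤ)).swap = ((1:ℤ),(0:ℤ)) := rfl
  rw [e0, e1, e2]
  ring

lemma dvd_of_dvd_swap {g : Rl} (h : FLed ∣ swapE g) : FLed ∣ g := by
  obtain ⟨k, hk⟩ := h
  refine ⟨swapE k, ?_⟩
  have := congrArg swapE hk
  rw [swapE_invol, map_mul, swapE_FLed] at this
  exact this

lemma mulConfig_swap (g : Rl) (c : ℤ × ℤ → ZMod 2) (u : ℤ × ℤ) :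
    mulConfig (swapE g) (fun w => c w.swap) u = mulConfig g c u.swap := by
  induction g using Rl.induction with
  | h0 => rw [map_zero]; simp [mulConfig_zero_left]
  | ha v r p hv hr ih =>
    rw [map_add, mulConfig_add, mulConfig_add, Pi.add_apply, Pi.add_apply, ih,
      swapE_single, mulConfig_single, mulConfig_single]
    rfl

lemma mulConfig_FLed_zero {c : ℤ × ℤ → ZMod 2}
    (hled : ∀ u, c u = c (u - (1,0)) + c (u - (0,1))) : mulConfig FLed c = 0 := by
  funext u
  rw [mulConfig_FLed]
  have h0 : u - ((0:ℤ),(0:ℤ)) = u := by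
    rw [Prod.ext_iff]; constructor <;> simp
  rw [h0, hled u]
  have hx : ∀ x y : ZMod 2, x + y + x + y = 0 := by decide
  rw [Pi.zero_apply, add_assoc, ← add_assoc]
  exact hx _ _


/-- If a configuration in the Ledrappier subshift (annihilated by
`f = 1 + x₁ + x₂`, i.e. `c(u) = c(u - e₁) + c(u - e₂)`) is also annihilated by
a nonzero Laurent polynomial all of whose irreducible factors are line
polynomials, then `c` is two-periodic. -/
theorem ledrappier_low_complexity_two_periodic (c : ℤ × ℤ → ZMod 2)
    (hled : ∀ u : ℤ × ℤ, c u = c (u - (1, 0)) + c (u - (0, 1)))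
    (g : AddMonoidAlgebra (ZMod 2) (ℤ × ℤ)) (hg : g ≠ 0)
    (hfac : ∀ q : AddMonoidAlgebra (ZMod 2) (ℤ × ℤ),
      Irreducible q → q ∣ g → IsLinePoly q)
    (hann : mulConfig g c = 0) :
    ∃ t₁ t₂ : ℤ × ℤ, LinearIndependent ℤ ![t₁, t₂] ∧
      (∀ v, c (v - t₁) = c v) ∧ (∀ v, c (v - t₂) = c v) := by

  have hnd : ¬ FLed ∣ g := fun hdvd =>
    not_isLinePoly_FLed (hfac FLed FLed_irreducible hdvd)
  have hF : mulConfig FLed c = 0 := mulConfig_FLed_zero hled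
  obtain ⟨T₁, hT₁, hper₁⟩ := horiz c hF g hnd hann
  -- swapped configuration
  set c' : ℤ × ℤ → ZMod 2 := fun w => c w.swap with hc'
  have hled' : ∀ u, c' u = c' (u - (1,0)) + c' (u - (0,1)) := by
    intro u
    have e1 : (u - ((1:ℤ),(0:ℤ))).swap = u.swap - ((0:ℤ),(1:ℤ)) := by
      rw [Prod.ext_iff]; constructor <;> simp
    have e2 : (u - ((0:ℤ),(1:ℤ))).swap = u.swap - ((1:ℤ),(0:ℤ)) := by
      rw [Prod.ext_iff]; constructor <;> simp
    rw [hc']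
    simp only [e1, e2]
    rw [hled u.swap]
    exact add_comm _ _
  have hF' : mulConfig FLed c' = 0 := mulConfig_FLed_zero hled'
  have hann' : mulConfig (swapE g) c' = 0 := by
    funext u
    rw [hc', mulConfig_swap g c u, hann]
    rfl
  have hnd' : ¬ FLed ∣ swapE g := fun hdvd => hnd (dvd_of_dvd_swap hdvd)
  obtain ⟨T₂, hT₂, hper₂⟩ := horiz c' hF' (swapE g) hnd' hann'
  refine ⟨((T₁ : ℤ), 0), (0, (T₂ : ℤ)), ?_, hper₁, ?_⟩
  · rw [LinearIndependent.pair_iff]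
    intro s t hst
    rw [Prod.ext_iff] at hst
    simp only [Prod.smul_fst, Prod.smul_snd, Prod.fst_add, Prod.snd_add, smul_eq_mul,
      Prod.fst_zero, Prod.snd_zero] at hst
    obtain ⟨e1, e2⟩ := hst
    simp only [mul_zero, add_zero, zero_add] at e1 e2
    constructor
    · rcases mul_eq_zero.mp e1 with h | h
      · exact h
      · omega
    · rcases mul_eq_zero.mp e2 with h | h
      · exact h
      · omega
  · intro w
    have := hper₂ w.swap
    have e1 : (w.swap - (T₂, 0)).swap = w - (0, T₂) := by
      rw [Prod.ext_iff]; constructor <;> simp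
    rw [hc'] at this
    simp only [] at this
    rw [e1, Prod.swap_swap] at this
    exact this


end
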